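/- Let G be the finite simple graph on the seven vertices {A, B, C, D, E, F, G'} whose edges are exactly {A,C}, {C,D}, {D,B}, {A,E}, {E,F}, {F,B}, {G',C}, {G',D}, {G',E}, {G',F}. Then A and B are not weakly 2-hyper-connected in G: the single vertex G' witnesses this, i.e., for S = {G'} every path from A to B in G contains an edge {X,Y} with G' ∈ N[X] and G' ∈ N[Y]. -/

import Mathlib

open SimpleGraph

/-- The closed neighborhood `N[x]` is disjoint from `S`. -/
def ClosedNbhdDisj {V : Type*} (G : SimpleGraph V) (S : Finset V) (x : V) : Prop :=
  ∀ u ∈ S, ¬ (x = u ∨ G.Adj x u)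

/-- `A` and `B` are weakly `k`-hyper-connected: for every `S ⊆ V \ {A,B}` with
`|S| < k` there is a path from `A` to `B` avoiding `S` such that for every
edge `{x, y}` of the path, `N[x] ∩ S = ∅` or `N[y] ∩ S = ∅`. -/
def WeaklyHyperConnected {V : Type*} (G : SimpleGraph V) (A B : V) (k : ℕ) : Prop :=
  ∀ S : Finset V, A ∉ S → B ∉ S → S.card < k →
    ∃ p : G.Walk A B, p.IsPath ∧ (∀ v ∈ p.support, v ∉ S) ∧
      p.support.Chain' (fun x y => ClosedNbhdDisj G S x ∨ ClosedNbhdDisj G S y)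

/-- The graph of Example 4: vertices `A = 0`, `B = 1`, `C = 2`, `D = 3`,
`E = 4`, `F = 5`, `G' = 6` and edges
`{A,C}, {C,D}, {D,B}, {A,E}, {E,F}, {F,B}, {G',C}, {G',D}, {G',E}, {G',F}`. -/
def exGraph7 : SimpleGraph (Fin 7) :=
  SimpleGraph.fromRel (fun x y =>
    (x, y) ∈ [((0 : Fin 7), (2 : Fin 7)), (2, 3), (3, 1),
              (0, 4), (4, 5), (5, 1), (6, 2), (6, 3), (6, 4), (6, 5)])


instance : DecidableRel exGraph7.Adj := fun a b =>
  decidable_of_iff _ (SimpleGraph.fromRel_adj _ a b).symm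

lemma exGraph7_not_cnd (v : Fin 7) (h0 : v ≠ 0) (h1 : v ≠ 1) :
    ¬ ClosedNbhdDisj exGraph7 {6} v := by
  intro h
  exact h 6 (Finset.mem_singleton_self 6)
    ((by decide : ∀ v : Fin 7, v ≠ 0 → v ≠ 1 → (v = 6 ∨ exGraph7.Adj v 6)) v h0 h1)

lemma exGraph7_key : ∀ p : exGraph7.Walk 0 1, p.IsPath →
    ¬ p.support.Chain' (fun x y =>
        ClosedNbhdDisj exGraph7 {6} x ∨ ClosedNbhdDisj exGraph7 {6} y) := by
  intro p hp hchain
  cases p with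
  | @cons _ v1 _ h q =>
    cases q with
    | nil => exact absurd h (by decide)
    | @cons _ v2 _ h2 r =>
      rw [Walk.support_cons, Walk.support_cons, r.support_eq_cons,
        List.Chain', List.isChain_cons_cons, List.isChain_cons_cons] at hchain
      have hv1_0 : v1 ≠ 0 := fun e => by subst e; exact exGraph7.irrefl h
      have hv1_1 : v1 ≠ 1 := fun e => by subst e; exact absurd h (by decide)
      have hv2_0 : v2 ≠ 0 := by
        intro e; subst e
        exact (Walk.cons_isPath_iff _ _).1 hp |>.2
          (by rw [Walk.support_cons]; exact List.mem_cons_of_mem _ r.start_mem_support)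
      have hv2_1 : v2 ≠ 1 := fun e => by
        subst e
        exact (by decide : ∀ x : Fin 7, ¬(exGraph7.Adj 0 x ∧ exGraph7.Adj x 1)) v1 ⟨h, h2⟩
      rcases hchain.2.1 with hc | hc
      · exact exGraph7_not_cnd v1 hv1_0 hv1_1 hc
      · exact exGraph7_not_cnd v2 hv2_0 hv2_1 hc

/-- In the graph of Example 4 (with `A = 0`, `B = 1`, `G' = 6`), `A` and `B`
are not weakly 2-hyper-connected, and the single vertex `G'` witnesses this:
for `S = {G'}`, every path from `A` to `B` contains an edge `{x,y}` with
`G' ∈ N[x]` and `G' ∈ N[y]`. -/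
theorem exGraph7_not_weaklyHyperConnected :
    ¬ WeaklyHyperConnected exGraph7 0 1 2 ∧
      ∀ p : exGraph7.Walk 0 1, p.IsPath →
        ¬ p.support.Chain' (fun x y =>
            ClosedNbhdDisj exGraph7 {6} x ∨ ClosedNbhdDisj exGraph7 {6} y) := by
  constructor
  · intro hW
    obtain ⟨p, hp, -, hchain⟩ := hW {6} (by decide) (by decide) (by decide)
    exact exGraph7_key p hp hchain
  · exact exGraph7_key
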